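/- Let A be a cDFA over alphabet Σ with state set Q, start state q0 and transition function δ, and let D₁,…,Dₙ ⊆ Σ be nonempty finite domains. For every i ∈ [1,n] and ℓ ∈ Dᵢ, the maximum of cost(q0,σ) over all domain-consistent strings σ of length n with σᵢ = ℓ equals the maximum over all q ∈ Q with preMax(i−1,q) ≠ −∞ of preMax(i−1,q) + inc + sufMax(i+1,q′), where δ(q,ℓ) = (q′,inc). -/
import Mathlib


/-- A counter-DFA over state type `Q` and alphabet `σ`: a start state and a total
transition function returning the successor state and the counter increment. -/
structure CDFA (Q : Type*) (σ : Type*) where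
  q0 : Q
  δ : Q → σ → Q × ℕ

namespace CDFA

variable {Q σ : Type*}

/-- The state reached from `q` after consuming a string. -/
def run (A : CDFA Q σ) : Q → List σ → Q
  | q, [] => q
  | q, ℓ :: w => A.run (A.δ q ℓ).1 w

/-- The total counter increase from state `q` upon consuming a string. -/
def cost (A : CDFA Q σ) : Q → List σ → ℕ
  | _, [] => 0
  | q, ℓ :: w => (A.δ q ℓ).2 + A.cost (A.δ q ℓ).1 w

end CDFA

namespace CDFA

variable {Q σ : Type*}

/-- `preMin A D i hi q` : the minimum cost (in `ℕ ∪ {∞}`) of a domain-consistent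
prefix string of length `i` leading from the start state to state `q`
(`∞` if no such string reaches `q`). -/
noncomputable def preMin (A : CDFA Q σ) {n : ℕ} (D : Fin n → Finset σ)
    (i : ℕ) (hi : i ≤ n) (q : Q) : ℕ∞ :=
  sInf {c : ℕ∞ | ∃ s : Fin i → σ, (∀ j, s j ∈ D (Fin.castLE hi j)) ∧
    A.run A.q0 (List.ofFn s) = q ∧ (A.cost A.q0 (List.ofFn s) : ℕ∞) = c}

/-- `preMax A D i hi q` : the maximum cost (in `ℕ ∪ {−∞}`) of a domain-consistent
prefix string of length `i` leading from the start state to state `q`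
(`−∞` if no such string reaches `q`). -/
noncomputable def preMax (A : CDFA Q σ) {n : ℕ} (D : Fin n → Finset σ)
    (i : ℕ) (hi : i ≤ n) (q : Q) : WithBot ℕ :=
  sSup {c : WithBot ℕ | ∃ s : Fin i → σ, (∀ j, s j ∈ D (Fin.castLE hi j)) ∧
    A.run A.q0 (List.ofFn s) = q ∧ (A.cost A.q0 (List.ofFn s) : WithBot ℕ) = c}

/-- `sufMin A D i q` : the minimum cost of a domain-consistent suffix string for
positions `i, …, n−1` (0-based), starting from state `q`. -/
noncomputable def sufMin (A : CDFA Q σ) {n : ℕ} (D : Fin n → Finset σ)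
    (i : ℕ) (q : Q) : ℕ :=
  sInf {c : ℕ | ∃ s : Fin (n - i) → σ,
    (∀ j : Fin (n - i), s j ∈ D ⟨i + j.val, by have := j.isLt; omega⟩) ∧
    A.cost q (List.ofFn s) = c}

/-- `sufMax A D i q` : the maximum cost of a domain-consistent suffix string for
positions `i, …, n−1` (0-based), starting from state `q`. -/
noncomputable def sufMax (A : CDFA Q σ) {n : ℕ} (D : Fin n → Finset σ)
    (i : ℕ) (q : Q) : ℕ :=
  sSup {c : ℕ | ∃ s : Fin (n - i) → σ,
    (∀ j : Fin (n - i), s j ∈ D ⟨i + j.val, by have := j.isLt; omega⟩) ∧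
    A.cost q (List.ofFn s) = c}

end CDFA

namespace CDFA
variable {Q σ : Type*}

theorem run_append' (A : CDFA Q σ) (q : Q) (u v : List σ) :
    A.run q (u ++ v) = A.run (A.run q u) v := by
  induction u generalizing q with
  | nil => rfl
  | cons a u ih => simp [run, ih]

theorem cost_append' (A : CDFA Q σ) (q : Q) (u v : List σ) :
    A.cost q (u ++ v) = A.cost q u + A.cost (A.run q u) v := by
  induction u generalizing q with
  | nil => simp [cost, run]
  | cons a u ih => simp [cost, run, ih, Nat.add_assoc]

theorem ofFn_split' {n : ℕ} (i : Fin n) (s : Fin n → σ) :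
    List.ofFn s = List.ofFn (fun j : Fin i.val => s (Fin.castLE i.isLt.le j)) ++
      s i :: List.ofFn (fun j : Fin (n - (i.val + 1)) => s ⟨i.val + 1 + j.val, by omega⟩) := by
  have hi := i.isLt
  apply List.ext_getElem
  · simp; omega
  · intro k h1 h2
    simp only [List.getElem_ofFn]
    rcases lt_trichotomy k i.val with h | h | h
    · rw [List.getElem_append_left (by simpa using h)]
      rw [List.getElem_ofFn]
      congr 1
    · rw [List.getElem_append_right (by simpa using h.ge)]
      subst h
      simp
    · rw [List.getElem_append_right (by simp; omega)]
      rw [List.getElem_cons]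
      rw [dif_neg (by simp; omega)]
      rw [List.getElem_ofFn]
      congr 1
      apply Fin.ext
      simp
      omega

theorem preMax_eq_image' (A : CDFA Q σ) {n : ℕ} (D : Fin n → Finset σ)
    (i : ℕ) (hi : i ≤ n) (q : Q) :
    A.preMax D i hi q = sSup (WithBot.some ''
      {c : ℕ | ∃ s : Fin i → σ, (∀ j, s j ∈ D (Fin.castLE hi j)) ∧
        A.run A.q0 (List.ofFn s) = q ∧ A.cost A.q0 (List.ofFn s) = c}) := by
  unfold preMax
  congr 1
  ext c
  constructor
  · rintro ⟨s, h1, h2, h3⟩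
    exact ⟨_, ⟨s, h1, h2, rfl⟩, by rw [← h3]; simp [Nat.cast_withBot]⟩
  · rintro ⟨m, ⟨s, h1, h2, h3⟩, rfl⟩
    exact ⟨s, h1, h2, by rw [h3]; simp [Nat.cast_withBot]⟩

end CDFA


set_option maxHeartbeats 1000000 in
/-- The maximum cost over all domain-consistent strings of length `n` whose `i`-th
symbol is `ℓ` equals the maximum, over all states `q` with `preMax(i−1,q) ≠ −∞`, of
`preMax(i−1,q) + inc + sufMax(i+1,q′)` where `δ(q,ℓ) = (q′,inc)` (positions 0-based). -/
theorem max_cost_eq_sup_preMax_add_sufMax {Q σ : Type*} [Fintype Q] [Fintype σ]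
    [DecidableEq Q] (A : CDFA Q σ) {n : ℕ} (D : Fin n → Finset σ)
    (hD : ∀ j, (D j).Nonempty) (i : Fin n) (ℓ : σ) (hℓ : ℓ ∈ D i) :
    ((sSup {c : ℕ | ∃ s : Fin n → σ, (∀ j, s j ∈ D j) ∧ s i = ℓ ∧
        A.cost A.q0 (List.ofFn s) = c} : ℕ) : WithBot ℕ) =
      (Finset.univ.filter (fun q : Q => A.preMax D i.val i.isLt.le q ≠ ⊥)).sup
        (fun q => A.preMax D i.val i.isLt.le q + ((A.δ q ℓ).2 : WithBot ℕ) +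
          (A.sufMax D (i.val + 1) (A.δ q ℓ).1 : WithBot ℕ)) := by
  classical
  simp only [Nat.cast_withBot, Nat.cast_id]
  have hi := i.isLt
  set S : Set ℕ := {c : ℕ | ∃ s : Fin n → σ, (∀ j, s j ∈ D j) ∧ s i = ℓ ∧
      A.cost A.q0 (List.ofFn s) = c} with hSdef
  have hSfin : S.Finite :=
    (Set.finite_range fun s : Fin n → σ => A.cost A.q0 (List.ofFn s)).subset
      (by rintro c ⟨s, _, _, rfl⟩; exact ⟨s, rfl⟩)
  have hSbdd : BddAbove S := hSfin.bddAbove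
  have hSne : S.Nonempty := by
    refine ⟨_, fun j => if h : j = i then ℓ else (hD j).choose, fun j => ?_, ?_, rfl⟩
    · by_cases h : j = i
      · subst h; simp [hℓ]
      · simp [h, (hD j).choose_spec]
    · simp
  set C : Q → Set ℕ := fun q => {c : ℕ | ∃ s : Fin i.val → σ,
      (∀ j, s j ∈ D (Fin.castLE i.isLt.le j)) ∧
      A.run A.q0 (List.ofFn s) = q ∧ A.cost A.q0 (List.ofFn s) = c} with hCdef
  have hCfin : ∀ q, (C q).Finite := fun q =>
    (Set.finite_range fun s : Fin i.val → σ => A.cost A.q0 (List.ofFn s)).subset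
      (by rintro c ⟨s, _, _, rfl⟩; exact ⟨s, rfl⟩)
  have hpre : ∀ q, A.preMax D i.val i.isLt.le q =
      sSup (WithBot.some '' C q) :=
    fun q => A.preMax_eq_image' D i.val i.isLt.le q
  have hpre_ne : ∀ q, (C q).Nonempty →
      A.preMax D i.val i.isLt.le q = WithBot.some (sSup (C q)) := by
    intro q hq
    rw [hpre q, ← WithBot.coe_sSup' hq (hCfin q).bddAbove]
  have hpre_bot : ∀ q, ¬(C q).Nonempty → A.preMax D i.val i.isLt.le q = ⊥ := by
    intro q hq
    rw [hpre q, Set.not_nonempty_iff_eq_empty.mp hq]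
    simp
  -- sufMax facts
  set T : Q → Set ℕ := fun q' => {c : ℕ | ∃ s : Fin (n - (i.val + 1)) → σ,
      (∀ j : Fin (n - (i.val + 1)), s j ∈ D ⟨(i.val + 1) + j.val, by have := j.isLt; omega⟩) ∧
      A.cost q' (List.ofFn s) = c} with hTdef
  have hTfin : ∀ q', (T q').Finite := fun q' =>
    (Set.finite_range fun s : Fin (n - (i.val + 1)) → σ => A.cost q' (List.ofFn s)).subset
      (by rintro c ⟨s, _, rfl⟩; exact ⟨s, rfl⟩)
  have hTne : ∀ q', (T q').Nonempty := fun q' =>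
    ⟨_, fun j => (hD ⟨(i.val + 1) + j.val, by have := j.isLt; omega⟩).choose,
      fun j => (hD _).choose_spec, rfl⟩
  have hsufeq : ∀ q', A.sufMax D (i.val + 1) q' = sSup (T q') := fun q' => rfl
  have hsuf_mem : ∀ q', A.sufMax D (i.val + 1) q' ∈ T q' := fun q' => by
    rw [hsufeq]; exact Nat.sSup_mem (hTne q') (hTfin q').bddAbove
  have hsuf_le : ∀ q' c, c ∈ T q' → c ≤ A.sufMax D (i.val + 1) q' := fun q' c hc => by
    rw [hsufeq]; exact le_csSup (hTfin q').bddAbove hc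
  apply le_antisymm
  · obtain ⟨s, hdom, hsi, hcost⟩ := Nat.sSup_mem hSne hSbdd
    have hsplit := CDFA.ofFn_split' i s
    set p : Fin i.val → σ := fun j => s (Fin.castLE i.isLt.le j) with hpdef
    set t : Fin (n - (i.val + 1)) → σ := fun j => s ⟨i.val + 1 + j.val, by omega⟩ with htdef
    set q := A.run A.q0 (List.ofFn p) with hqdef
    have hc : A.cost A.q0 (List.ofFn s) =
        A.cost A.q0 (List.ofFn p) + ((A.δ q ℓ).2 + A.cost (A.δ q ℓ).1 (List.ofFn t)) := by
      rw [hsplit, A.cost_append', hsi]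
      rfl
    have hCpmem : A.cost A.q0 (List.ofFn p) ∈ C q := ⟨p, fun j => hdom _, rfl, rfl⟩
    have hCne : (C q).Nonempty := ⟨_, hCpmem⟩
    have hq_filter : q ∈ Finset.univ.filter
        (fun q : Q => A.preMax D i.val i.isLt.le q ≠ ⊥) := by
      simp only [Finset.mem_filter, Finset.mem_univ, true_and]
      rw [hpre_ne q hCne]
      exact WithBot.coe_ne_bot
    refine le_trans ?_ (Finset.le_sup hq_filter)
    rw [hpre_ne q hCne, ← hcost, hc]
    have h1 : A.cost A.q0 (List.ofFn p) ≤ sSup (C q) := le_csSup (hCfin q).bddAbove hCpmem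
    have h2 : A.cost (A.δ q ℓ).1 (List.ofFn t) ≤ A.sufMax D (i.val + 1) (A.δ q ℓ).1 := by
      refine hsuf_le _ _ ⟨t, fun j => ?_, rfl⟩
      exact hdom _
    rw [← WithBot.coe_add, ← WithBot.coe_add]
    exact WithBot.coe_le_coe.2 (by omega)
  · apply Finset.sup_le
    intro q hq
    have hne : (C q).Nonempty := by
      by_contra h
      exact (Finset.mem_filter.mp hq).2 (hpre_bot q h)
    rw [hpre_ne q hne]
    obtain ⟨p, hp, hrun, hcp⟩ := Nat.sSup_mem hne (hCfin q).bddAbove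
    obtain ⟨t, ht, hct⟩ := hsuf_mem (A.δ q ℓ).1
    set s : Fin n → σ := fun j => if h : j.val < i.val then p ⟨j.val, h⟩
      else if h2 : j.val = i.val then ℓ
      else t ⟨j.val - (i.val + 1), by have := j.isLt; omega⟩ with hsdef
    have hsi : s i = ℓ := by simp [hsdef]
    have hpre_eq : (fun j : Fin i.val => s (Fin.castLE i.isLt.le j)) = p := by
      funext j
      simp only [hsdef]
      rw [dif_pos (show (Fin.castLE i.isLt.le j).val < i.val from j.isLt)]
      exact congrArg p (Fin.ext rfl)
    have hsuf_eq : (fun j : Fin (n - (i.val + 1)) =>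
        s ⟨i.val + 1 + j.val, by omega⟩) = t := by
      funext j
      simp only [hsdef]
      rw [dif_neg (by omega), dif_neg (by omega)]
      congr 1
      apply Fin.ext
      simp
    have hsplit := CDFA.ofFn_split' i s
    rw [hpre_eq, hsuf_eq, hsi] at hsplit
    have hcost : A.cost A.q0 (List.ofFn s) =
        sSup (C q) + ((A.δ q ℓ).2 + A.sufMax D (i.val + 1) (A.δ q ℓ).1) := by
      rw [hsplit, A.cost_append', hcp, hrun]
      simp [CDFA.cost, hct]
    have hdom : ∀ j, s j ∈ D j := by
      intro j
      rcases lt_trichotomy j.val i.val with h | h | h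
      · have h3 := hp ⟨j.val, h⟩
        have he : Fin.castLE i.isLt.le ⟨j.val, h⟩ = j := Fin.ext rfl
        rw [he] at h3
        have hs : s j = p ⟨j.val, h⟩ := by simp only [hsdef]; rw [dif_pos h]
        rw [hs]
        exact h3
      · have he : j = i := Fin.ext h
        subst he
        simpa [hsdef] using hℓ
      · have h3 := ht ⟨j.val - (i.val + 1), by have := j.isLt; omega⟩
        have he : (⟨(i.val + 1) + (j.val - (i.val + 1)), by have := j.isLt; omega⟩ : Fin n)
            = j := Fin.ext (by simp; omega)
        rw [he] at h3
        have : s j = t ⟨j.val - (i.val + 1), by have := j.isLt; omega⟩ := by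
          simp only [hsdef]
          rw [dif_neg (by omega), dif_neg (by omega)]
        rw [this]
        exact h3
    have hmem : A.cost A.q0 (List.ofFn s) ∈ S := ⟨s, hdom, hsi, rfl⟩
    have hle : sSup (C q) + ((A.δ q ℓ).2 + A.sufMax D (i.val + 1) (A.δ q ℓ).1) ≤ sSup S :=
      hcost ▸ le_csSup hSbdd hmem
    rw [← WithBot.coe_add, ← WithBot.coe_add]
    exact WithBot.coe_le_coe.2 (by omega)
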